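/- Let L/K be a finite Galois extension. Then for every intermediate field K ⊆ M ⊆ L, the extension L/M is Galois, and the centralizer of M in End_K(L) equals L⋊Aut_M(L) with |Aut_M(L)| = [L:M]. -/

import Mathlib

/-- Let `L/K` be a finite Galois extension and `M` an intermediate field.  Then `L/M` is
Galois, the centralizer of (the image of) `M` in `End_K(L)` equals `L⋊Aut_M(L)` (where
`Aut_M(L) ⊆ Aut_K(L)` is the subgroup fixing `M` pointwise), and `|Aut_M(L)| = [L:M]`. -/
theorem stmt13 (K L : Type) [Field K] [Field L] [Algebra K L] [FiniteDimensional K L]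
    [IsGalois K L] (M : IntermediateField K L) :
    IsGalois M L ∧
    Subalgebra.centralizer K ((Algebra.lmul K L) '' (M : Set L)) =
      Algebra.adjoin K (Set.range (Algebra.lmul K L) ∪
        (fun g : L ≃ₐ[K] L => (g.toLinearMap : Module.End K L)) ''
          (M.fixingSubgroup : Set (L ≃ₐ[K] L))) ∧
    Nat.card M.fixingSubgroup = Module.finrank M L := by
  refine ⟨inferInstance, ?_, ?_⟩
  · apply le_antisymm
    · -- centralizer ≤ adjoin
      intro f hf
      rw [Subalgebra.mem_centralizer_iff] at hf
      have hM : ∀ (m : M) (x : L), f ((m : L) * x) = (m : L) * f x := by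
        intro m x
        have h := (hf (Algebra.lmul K L (m : L)) ⟨(m : L), m.2, rfl⟩).symm
        have := congrFun (congrArg DFunLike.coe h) x
        simpa using this
      set f' : L →ₗ[M] L :=
        { toFun := f, map_add' := f.map_add,
          map_smul' := fun m x => hM m x } with hf'
      have hspan : Submodule.span L
          (Set.range (AlgHom.toLinearMap : (L →ₐ[M] L) → L →ₗ[M] L)) = ⊤ := by
        apply (linearIndependent_algHom_toLinearMap M L L).span_eq_top_of_card_eq_finrank
        rw [Module.finrank_linearMap_self, ← IsGalois.card_aut_eq_finrank M L,
          Nat.card_congr (algEquivEquivAlgHom M L).toEquiv, Nat.card_eq_fintype_card]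
      have hmem : f' ∈ Submodule.span L
          (Set.range (AlgHom.toLinearMap : (L →ₐ[M] L) → L →ₗ[M] L)) := by
        rw [hspan]; trivial
      rw [Finsupp.mem_span_range_iff_exists_finsupp] at hmem
      obtain ⟨c, hc⟩ := hmem
      have key : f = (c.sum fun σ a =>
          (Algebra.lmul K L a) *
            ((((IntermediateField.fixingSubgroupEquiv M).symm
              ((algEquivEquivAlgHom M L).symm σ) : L ≃ₐ[K] L).toLinearMap :
                Module.End K L))) := by
        ext x
        rw [show f x = f' x from rfl, ← hc]
        rw [Finsupp.sum, Finsupp.sum, LinearMap.sum_apply, LinearMap.sum_apply]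
        apply Finset.sum_congr rfl
        intro σ _
        simp only [LinearMap.smul_apply, AlgHom.toLinearMap_apply, Module.End.mul_apply,
          AlgEquiv.toLinearMap_apply, smul_eq_mul]
        rfl
      rw [key]
      apply Subalgebra.sum_mem
      intro σ _
      apply mul_mem
      · exact Algebra.subset_adjoin (Or.inl ⟨_, rfl⟩)
      · exact Algebra.subset_adjoin (Or.inr ⟨_, Subtype.mem _, rfl⟩)
    · -- adjoin ≤ centralizer
      rw [Algebra.adjoin_le_iff]
      rintro g (⟨a, rfl⟩ | ⟨σ, hσ, rfl⟩) <;>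
        rw [SetLike.mem_coe, Subalgebra.mem_centralizer_iff] <;>
        rintro _ ⟨m, hm, rfl⟩ <;> ext x <;>
        simp only [Module.End.mul_apply, AlgEquiv.toLinearMap_apply]
      · show m * (a * x) = a * (m * x); ring
      · show m * σ x = σ (m * x)
        rw [map_mul, ((IntermediateField.mem_fixingSubgroup_iff M σ).mp hσ) m hm]
  · rw [Nat.card_congr (IntermediateField.fixingSubgroupEquiv M).toEquiv,
      IsGalois.card_aut_eq_finrank]
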